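/- Let D = [[a,b],[c,d]] ∈ SL(2,ℝ) with ‖D‖ ≤ C₀. If the angle between D·(1,0)ᵀ and (0,1)ᵀ (as lines in ℝP¹) is greater than κ ∈ (0,1), then |a| ≥ (1/10)·C₀⁻¹·κ. -/

import Mathlib

open Real

noncomputable def vnorm (x : Fin 2 → ℝ) : ℝ := Real.sqrt (x 0 ^ 2 + x 1 ^ 2)

/-- The operator norm of a 2×2 matrix, as the supremum of images of unit vectors. -/
noncomputable def opNorm2 (A : Matrix (Fin 2) (Fin 2) ℝ) : ℝ :=
  ⨆ θ : ℝ, vnorm (A.mulVec ![Real.cos θ, Real.sin θ])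

/-- The argument of a planar vector. -/
noncomputable def argOf (x : Fin 2 → ℝ) : ℝ := Complex.arg (x 0 + x 1 * Complex.I)

/-- The projective angle between (the lines spanned by) two vectors: the distance of the
difference of arguments to `πℤ`. -/
noncomputable def pangle (x y : Fin 2 → ℝ) : ℝ :=
  ‖((argOf x - argOf y : ℝ) : AddCircle (π : ℝ))‖

lemma aux_bdd (A : Matrix (Fin 2) (Fin 2) ℝ) :
    BddAbove (Set.range fun θ => vnorm (A.mulVec ![Real.cos θ, Real.sin θ])) := by
  refine ⟨Real.sqrt (A 0 0^2 + A 0 1^2 + (A 1 0^2 + A 1 1^2)), ?_⟩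
  rintro x ⟨θ, rfl⟩
  unfold vnorm
  apply Real.sqrt_le_sqrt
  have h := Real.sin_sq_add_cos_sq θ
  simp [Matrix.mulVec, dotProduct, Fin.sum_univ_two]
  nlinarith [sq_nonneg (A 0 0 * Real.sin θ - A 0 1 * Real.cos θ),
    sq_nonneg (A 1 0 * Real.sin θ - A 1 1 * Real.cos θ)]

set_option maxHeartbeats 1000000 in
/-- if `D = [[a,b],[c,d]] ∈ SL(2,ℝ)` with `‖D‖ ≤ C₀` and the projective angle
between `D(1,0)ᵀ` and `(0,1)ᵀ` exceeds `κ ∈ (0,1)`, then `|a| ≥ (1/10) C₀⁻¹ κ`. -/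
theorem stmt_1 (a b c d C₀ κ : ℝ)
    (hdet : (!![a, b; c, d] : Matrix (Fin 2) (Fin 2) ℝ).det = 1)
    (hnorm : opNorm2 !![a, b; c, d] ≤ C₀)
    (hκ0 : 0 < κ) (hκ1 : κ < 1)
    (hangle : pangle ((!![a, b; c, d] : Matrix (Fin 2) (Fin 2) ℝ).mulVec ![1, 0]) ![0, 1] > κ) :
    |a| ≥ (1 / 10) * C₀⁻¹ * κ := by
  have hpi := Real.pi_gt_three
  have hdet' : a * d - b * c = 1 := by
    rw [Matrix.det_fin_two_of] at hdet; linarith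
  -- ‖(b,d)‖ ≤ C₀
  have hbd : Real.sqrt (b ^ 2 + d ^ 2) ≤ C₀ := by
    have h := le_ciSup (aux_bdd !![a, b; c, d]) (π / 2)
    have hv : (!![a, b; c, d] : Matrix (Fin 2) (Fin 2) ℝ).mulVec
        ![Real.cos (π/2), Real.sin (π/2)] = ![b, d] := by
      funext i; fin_cases i <;>
        simp [Matrix.mulVec, dotProduct, Fin.sum_univ_two]
    rw [hv] at h
    have hv2 : vnorm ![b, d] = Real.sqrt (b ^ 2 + d ^ 2) := by
      simp [vnorm]
    rw [hv2] at h
    exact h.trans hnorm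
  have hbdpos : 0 < Real.sqrt (b ^ 2 + d ^ 2) := by
    apply Real.sqrt_pos.2
    rcases eq_or_ne b 0 with hb | hb
    · rcases eq_or_ne d 0 with hd | hd
      · exfalso; rw [hb, hd] at hdet'; linarith
      · positivity
    · positivity
  have hC0 : 0 < C₀ := lt_of_lt_of_le hbdpos hbd
  set r := Real.sqrt (a ^ 2 + c ^ 2) with hrdef
  have hr0 : 0 ≤ r := Real.sqrt_nonneg _
  -- r * ‖(b,d)‖ ≥ 1 (Cauchy–Schwarz vs determinant)
  have hrs : 1 ≤ r * Real.sqrt (b ^ 2 + d ^ 2) := by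
    have h1 : r ^ 2 = a ^ 2 + c ^ 2 := Real.sq_sqrt (by positivity)
    have h2 : Real.sqrt (b ^ 2 + d ^ 2) ^ 2 = b ^ 2 + d ^ 2 := Real.sq_sqrt (by positivity)
    nlinarith [sq_nonneg (a * b + c * d), mul_nonneg hr0 hbdpos.le]
  have hrC : C₀⁻¹ ≤ r := by
    have h1 : 1 ≤ r * C₀ := hrs.trans (mul_le_mul_of_nonneg_left hbd hr0)
    have h2 : C₀ * C₀⁻¹ = 1 := mul_inv_cancel₀ hC0.ne'
    nlinarith [mul_nonneg (sub_nonneg.2 h1) (inv_nonneg.2 hC0.le)]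
  -- the vector D e₁ and its argument
  set z : ℂ := (a : ℂ) + (c : ℂ) * Complex.I with hzdef
  have hz0 : z ≠ 0 := by
    intro h
    rw [Complex.ext_iff] at h
    simp [hzdef] at h
    rw [h.1, h.2] at hdet'; linarith
  have habs : ‖z‖ = r := by
    rw [Complex.norm_def, Complex.normSq_apply]
    simp [hzdef]
    ring_nf
    exact hrdef.symm
  have hcos : Real.cos (Complex.arg z) = a / r := by
    rw [Complex.cos_arg hz0, habs]; simp [hzdef]
  have hrpos : 0 < r := by
    rcases habs ▸ (norm_pos_iff.mpr hz0) with h; exact h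
  have hacos : |a| = r * |Real.cos (Complex.arg z)| := by
    rw [hcos, abs_div, abs_of_pos hrpos]
    field_simp
  -- rewrite the angle hypothesis
  have hv1 : (!![a, b; c, d] : Matrix (Fin 2) (Fin 2) ℝ).mulVec ![1, 0] = ![a, c] := by
    funext i; fin_cases i <;> simp [Matrix.mulVec, dotProduct, Fin.sum_univ_two]
  rw [hv1] at hangle
  have harg1 : argOf ![a, c] = Complex.arg z := by simp [argOf, hzdef]
  have harg2 : argOf ![(0:ℝ), 1] = π / 2 := by
    simp [argOf, Complex.arg_I]
  rw [pangle, harg1, harg2] at hangle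
  set θ := Complex.arg z - π / 2 with hθdef
  set n : ℤ := round (π⁻¹ * θ) with hndef
  set t := θ - n * π with htdef
  have hnorm_eq : ‖((θ : ℝ) : AddCircle (π : ℝ))‖ = |t| := by
    rw [AddCircle.norm_eq]
  rw [hnorm_eq] at hangle
  have htle : |t| ≤ π / 2 := by
    have := AddCircle.norm_le_half_period (π : ℝ) (x := ((θ : ℝ) : AddCircle (π : ℝ)))
      (by positivity)
    rw [hnorm_eq, abs_of_pos Real.pi_pos] at this
    exact this
  -- |cos (arg z)| = sin |t|
  have hcossin : |Real.cos (Complex.arg z)| = Real.sin |t| := by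
    have h1 : Complex.arg z = t + n * π + π / 2 := by rw [htdef, hθdef]; ring
    rw [h1, Real.cos_add_pi_div_two]
    rw [Real.sin_add_int_mul_pi]
    rw [abs_neg, abs_mul]
    have h2 : |((-1 : ℝ)) ^ n| = 1 := by
      rcases Int.even_or_odd n with h | h
      · rw [h.neg_one_zpow]; simp
      · rw [Odd.neg_one_zpow h]; simp
    rw [h2, one_mul]
    rcases le_or_gt 0 t with h | h
    · rw [abs_of_nonneg h, abs_of_nonneg (Real.sin_nonneg_of_nonneg_of_le_pi h
        (by rw [abs_of_nonneg h] at htle; linarith))]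
    · rw [abs_of_neg h, Real.sin_neg,
        abs_of_nonpos (Real.sin_nonpos_of_nonpos_of_neg_pi_le h.le
          (by rw [abs_of_neg h] at htle; linarith))]
  -- sin |t| ≥ sin κ
  have hκhalf : κ < π / 2 := by linarith
  have hsinmono : Real.sin κ ≤ Real.sin |t| :=
    (Real.strictMonoOn_sin (Set.mem_Icc.2 ⟨by linarith, hκhalf.le⟩)
      (Set.mem_Icc.2 ⟨by linarith [abs_nonneg t], htle⟩) hangle).le
  have hsinκ : (3 / 4) * κ ≤ Real.sin κ := by
    have := Real.sin_gt_sub_cube hκ0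
    nlinarith [sq_nonneg κ, hκ0.le]
  -- conclude
  have key : C₀⁻¹ * ((3 / 4) * κ) ≤ |a| := by
    rw [hacos, hcossin]
    have h1 : (3/4) * κ ≤ Real.sin |t| := hsinκ.trans hsinmono
    have h2 : 0 ≤ (3/4) * κ := by positivity
    calc C₀⁻¹ * ((3 / 4) * κ) ≤ r * ((3/4) * κ) :=
          mul_le_mul_of_nonneg_right hrC h2
      _ ≤ r * Real.sin |t| := mul_le_mul_of_nonneg_left h1 hr0
  have hinv : 0 ≤ C₀⁻¹ := inv_nonneg.2 hC0.le
  nlinarith [mul_nonneg hinv hκ0.le]
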